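/- If P is a downset in the poset of finite set partitions (ordered by order-isomorphic induced restriction) such that the maximum number of blocks over all partitions in P equals k (a finite number), then there exist a natural number n₀ and polynomials p₁(x), p₂(x), …, p_k(x) with rational coefficients such that for every n > n₀, the number of partitions in P of order n equals p₁(n)·1ⁿ + p₂(n)·2ⁿ + ⋯ + p_k(n)·kⁿ. -/

import Mathlib

set_option maxHeartbeats 1000000

open Polynomial List

/-- Containment of set partitions: a set partition of `{1,…,n}` is modeled as an
equivalence relation (setoid) on `Fin n`; `S ≺ T` iff there is a strictly increasing
injection mapping same-block pairs to same-block pairs and conversely. -/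
def PartitionLE {m n : ℕ} (S : Setoid (Fin m)) (T : Setoid (Fin n)) : Prop :=
  ∃ f : Fin m → Fin n, StrictMono f ∧ ∀ x y : Fin m, S.r x y ↔ T.r (f x) (f y)

namespace KlazarAux




variable (k : ℕ)

/-- "Eventually an exponential polynomial with bases 1..k". -/
def EP (f : ℕ → ℚ) : Prop :=
  ∃ (n₀ : ℕ) (p : Fin k → Polynomial ℚ),
    ∀ n : ℕ, n > n₀ →
      f n = ∑ i : Fin k, (p i).eval (n : ℚ) * (((i : ℕ) : ℚ) + 1) ^ n

variable {k}

lemma EP_zero : EP k (fun _ => 0) := by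
  refine ⟨0, fun _ => 0, fun n _ => ?_⟩
  simp

lemma EP_congr {f g : ℕ → ℚ} (h : ∃ N, ∀ n > N, f n = g n) (hf : EP k f) : EP k g := by
  obtain ⟨N, hN⟩ := h
  obtain ⟨n₀, p, hp⟩ := hf
  exact ⟨max N n₀, p, fun n hn => (hN n (lt_of_le_of_lt (le_max_left _ _) hn)).symm ▸
    hp n (lt_of_le_of_lt (le_max_right _ _) hn)⟩

lemma EP_add {f g : ℕ → ℚ} (hf : EP k f) (hg : EP k g) : EP k (fun n => f n + g n) := by
  obtain ⟨n₀, p, hp⟩ := hf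
  obtain ⟨n₁, q, hq⟩ := hg
  refine ⟨max n₀ n₁, fun i => p i + q i, fun n hn => ?_⟩
  dsimp only
  rw [hp n (lt_of_le_of_lt (le_max_left _ _) hn), hq n (lt_of_le_of_lt (le_max_right _ _) hn),
    ← Finset.sum_add_distrib]
  exact Finset.sum_congr rfl fun i _ => by simp [add_mul]

lemma EP_smul (c : ℚ) {f : ℕ → ℚ} (hf : EP k f) : EP k (fun n => c * f n) := by
  obtain ⟨n₀, p, hp⟩ := hf
  refine ⟨n₀, fun i => Polynomial.C c * p i, fun n hn => ?_⟩
  dsimp only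
  rw [hp n hn, Finset.mul_sum]
  exact Finset.sum_congr rfl fun i _ => by simp [mul_assoc]

lemma EP_sum {ι : Type*} (s : Finset ι) (f : ι → ℕ → ℚ) (hf : ∀ i ∈ s, EP k (f i)) :
    EP k (fun n => ∑ i ∈ s, f i n) := by
  classical
  induction s using Finset.induction with
  | empty => simpa using (EP_zero : EP k _)
  | @insert a s' hx ih =>
    have h2 := EP_add (hf a (Finset.mem_insert_self a s'))
      (ih (fun i hi => hf i (Finset.mem_insert_of_mem hi)))
    exact EP_congr ⟨0, fun n _ => by rw [Finset.sum_insert hx]⟩ h2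

/-- A pure geometric term `c * d^n` with `1 ≤ d ≤ k` is EP. -/
lemma EP_geom (c : ℚ) (d : ℕ) (hd1 : 1 ≤ d) (hdk : d ≤ k) : EP k (fun n => c * (d : ℚ) ^ n) := by
  have hdm : d - 1 < k := by omega
  refine ⟨0, fun i => if ((i : ℕ) + 1 = d) then Polynomial.C c else 0, fun n _ => ?_⟩
  dsimp only
  rw [Finset.sum_eq_single (⟨d - 1, hdm⟩ : Fin k)]
  · rw [if_pos (show ((⟨d - 1, hdm⟩ : Fin k) : ℕ) + 1 = d by show d - 1 + 1 = d; omega)]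
    have hcast : ((((⟨d - 1, hdm⟩ : Fin k) : ℕ) : ℚ) + 1) = (d : ℚ) := by
      show ((d - 1 : ℕ) : ℚ) + 1 = (d : ℚ)
      have : ((d - 1 : ℕ) : ℚ) = (d : ℚ) - 1 := by
        push_cast [Nat.cast_sub (by omega : 1 ≤ d)]; ring
      rw [this]; ring
    rw [hcast, Polynomial.eval_C, mul_comm]
  · intro i _ hi
    rw [if_neg, Polynomial.eval_zero, zero_mul]
    intro h
    exact hi (Fin.ext (by show (i:ℕ) = d - 1; omega))
  · intro h
    exact absurd (Finset.mem_univ _) h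



/-- The operator `r ↦ α·r(X+1) − β·r`. -/
noncomputable def Tp (α β : ℚ) (r : ℚ[X]) : ℚ[X] :=
  Polynomial.C α * (Polynomial.taylor 1 r) - Polynomial.C β * r

lemma Tp_add (α β : ℚ) (r s : ℚ[X]) : Tp α β (r + s) = Tp α β r + Tp α β s := by
  simp only [Tp, map_add]; ring

lemma Tp_eval (α β : ℚ) (r : ℚ[X]) (x : ℚ) :
    (Tp α β r).eval x = α * r.eval (x + 1) - β * r.eval x := by
  simp only [Tp, eval_sub, eval_mul, eval_C, taylor_apply, eval_comp, eval_add, eval_X, eval_one]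

lemma Tp_monomial_coeff (α β : ℚ) (a : ℚ) (M j : ℕ) :
    (Tp α β (Polynomial.C a * X ^ M)).coeff j =
      α * a * (M.choose j) - β * a * (if j = M then 1 else 0) := by
  have h1 : Polynomial.taylor (1 : ℚ) (Polynomial.C a * X ^ M) = Polynomial.C a * (X + 1) ^ M := by
    simp [taylor_apply, mul_comp, C_comp, pow_comp, X_comp, add_comm]
  simp only [Tp, h1, coeff_sub, coeff_C_mul, coeff_X_add_one_pow, coeff_X_pow]
  split_ifs <;> ring

/-- Key surjectivity: for `α ≠ 0`, `r ↦ α·r(X+1) − β·r = q` is solvable. -/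
lemma Tp_surj (α β : ℚ) (hα : α ≠ 0) : ∀ (n : ℕ) (q : ℚ[X]), q.natDegree ≤ n →
    ∃ r : ℚ[X], Tp α β r = q := by
  intro n
  induction n with
  | zero =>
    intro q hq
    obtain ⟨c0, rfl⟩ : ∃ c0, q = Polynomial.C c0 := ⟨q.coeff 0, eq_C_of_natDegree_le_zero hq⟩
    rcases eq_or_ne α β with hab | hab
    · refine ⟨Polynomial.C (c0 / α) * X ^ 1, ?_⟩
      ext j
      rw [Tp_monomial_coeff]
      match j with
      | 0 =>
        rw [if_neg (by omega), Nat.choose_zero_right, coeff_C_zero]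
        push_cast
        field_simp
        ring
      | 1 =>
        rw [if_pos rfl, Nat.choose_self, ← hab, coeff_C, if_neg (by omega)]
        push_cast
        ring
      | (j+2) =>
        rw [if_neg (by omega), Nat.choose_eq_zero_of_lt (by omega), coeff_C, if_neg (by omega)]
        push_cast
        ring
    · have hab' : α - β ≠ 0 := sub_ne_zero.2 hab
      refine ⟨Polynomial.C (c0 / (α - β)) * X ^ 0, ?_⟩
      ext j
      rw [Tp_monomial_coeff]
      match j with
      | 0 =>
        rw [if_pos rfl]
        simp only [Nat.choose_self, Nat.cast_one, coeff_C_zero, mul_one]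
        field_simp
      | (j+1) =>
        rw [if_neg (by omega), Nat.choose_eq_zero_of_lt (by omega), coeff_C, if_neg (by omega)]
        push_cast
        ring
  | succ n ih =>
    intro q hq
    set c := q.coeff (n + 1) with hc
    rcases eq_or_ne α β with hab | hab
    · -- α = β : use degree n+2 monomial
      have hne : ((n : ℚ) + 2) ≠ 0 := by positivity
      set r₀ : ℚ[X] := Polynomial.C (c / (α * ((n : ℚ) + 2))) * X ^ (n + 2) with hr₀
      have hco : ∀ j, n + 1 < j → (Tp α β r₀).coeff j = 0 := by
        intro j hj
        rw [hr₀, Tp_monomial_coeff]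
        rcases eq_or_ne j (n + 2) with h | h
        · subst h; rw [if_pos rfl, Nat.choose_self, ← hab]; ring
        · rw [Nat.choose_eq_zero_of_lt (by omega), if_neg h]; simp
      have hcn : (Tp α β r₀).coeff (n + 1) = c := by
        rw [hr₀, Tp_monomial_coeff, if_neg (by omega)]
        have hch : (((n + 2).choose (n + 1) : ℕ) : ℚ) = (n : ℚ) + 2 := by
          rw [Nat.choose_succ_self_right]; push_cast; ring
        rw [hch]
        field_simp
        ring
      obtain ⟨r', hr'⟩ := ih (q - Tp α β r₀) (by
        rw [natDegree_le_iff_coeff_eq_zero]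
        intro j hj
        rcases eq_or_ne j (n+1) with h | h
        · subst h; simp [hcn, hc]
        · have h2 : n + 1 < j := by omega
          rw [coeff_sub, hco j h2, coeff_eq_zero_of_natDegree_lt (lt_of_le_of_lt hq h2), sub_zero])
      exact ⟨r₀ + r', by rw [Tp_add, hr']; ring⟩
    · have hab' : α - β ≠ 0 := sub_ne_zero.2 hab
      set r₀ : ℚ[X] := Polynomial.C (c / (α - β)) * X ^ (n + 1) with hr₀
      have hco : ∀ j, n + 1 < j → (Tp α β r₀).coeff j = 0 := by
        intro j hj
        rw [hr₀, Tp_monomial_coeff, Nat.choose_eq_zero_of_lt (by omega), if_neg (by omega)]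
        simp
      have hcn : (Tp α β r₀).coeff (n + 1) = c := by
        rw [hr₀, Tp_monomial_coeff, if_pos rfl, Nat.choose_self]
        field_simp
        ring
      obtain ⟨r', hr'⟩ := ih (q - Tp α β r₀) (by
        rw [natDegree_le_iff_coeff_eq_zero]
        intro j hj
        rcases eq_or_ne j (n+1) with h | h
        · subst h; simp [hcn, hc]
        · have h2 : n + 1 < j := by omega
          rw [coeff_sub, hco j h2, coeff_eq_zero_of_natDegree_lt (lt_of_le_of_lt hq h2), sub_zero])
      exact ⟨r₀ + r', by rw [Tp_add, hr']; ring⟩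

lemma poly_solve (α β : ℚ) (hα : α ≠ 0) (q : ℚ[X]) :
    ∃ r : ℚ[X], ∀ x : ℚ, α * r.eval (x + 1) - β * r.eval x = q.eval x := by
  obtain ⟨r, hr⟩ := Tp_surj α β hα q.natDegree q le_rfl
  exact ⟨r, fun x => by rw [← Tp_eval, hr]⟩

lemma EP_rec {f g : ℕ → ℚ} (d : ℕ) (hd : d ≤ k) (hg : EP k g)
    (hf : ∀ n, f (n + 1) = (d : ℚ) * f n + g n) : EP k f := by
  obtain ⟨n₁, p, hp⟩ := hg
  rcases Nat.eq_zero_or_pos d with hd0 | hd1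
  · -- d = 0 : f is a shift of g
    subst hd0
    refine ⟨n₁ + 1, fun i => Polynomial.C (1 / (((i : ℕ) : ℚ) + 1)) *
      (p i).comp (Polynomial.X - 1), fun n hn => ?_⟩
    obtain ⟨m, rfl⟩ : ∃ m, n = m + 1 := ⟨n - 1, by omega⟩
    have h1 := hf m
    rw [Nat.cast_zero, zero_mul, zero_add] at h1
    rw [h1, hp m (by omega)]
    apply Finset.sum_congr rfl
    intro i _
    have hi : ((i : ℕ) : ℚ) + 1 ≠ 0 := by positivity
    rw [Polynomial.eval_mul, Polynomial.eval_C, Polynomial.eval_comp]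
    simp only [Polynomial.eval_sub, Polynomial.eval_X, Polynomial.eval_one]
    have hc : ((m + 1 : ℕ) : ℚ) - 1 = (m : ℚ) := by push_cast; ring
    rw [hc]
    rw [pow_succ]
    field_simp
  · -- d ≥ 1
    choose r hr using fun i : Fin k => poly_solve (((i : ℕ) : ℚ) + 1) (d : ℚ) (by positivity) (p i)
    set h : ℕ → ℚ := fun n => ∑ i : Fin k, (r i).eval (n : ℚ) * (((i : ℕ) : ℚ) + 1) ^ n with hh
    have hrec : ∀ n, n > n₁ → h (n + 1) = (d : ℚ) * h n + g n := by
      intro n hn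
      rw [hp n hn, hh]
      dsimp only
      rw [Finset.mul_sum, ← Finset.sum_add_distrib]
      apply Finset.sum_congr rfl
      intro i _
      have hcast : ((n + 1 : ℕ) : ℚ) = (n : ℚ) + 1 := by push_cast; ring
      rw [hcast, pow_succ]
      linear_combination ((((i : ℕ) : ℚ) + 1) ^ n) * (hr i (n : ℚ))
    have hdq : ((d : ℚ)) ≠ 0 := by positivity
    set C0 : ℚ := (f (n₁ + 1) - h (n₁ + 1)) / (d : ℚ) ^ (n₁ + 1) with hC0
    have key : ∀ n, n ≥ n₁ + 1 → f n - h n = C0 * (d : ℚ) ^ n := by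
      intro n
      induction n with
      | zero => omega
      | succ m ihm =>
        intro hm1
        rcases Nat.lt_or_ge m (n₁ + 1) with hm | hm
        · have : m = n₁ := by omega
          subst this
          rw [hC0]
          field_simp
        · have h1 := hf m
          have h2 := hrec m (by omega)
          have h3 := ihm hm
          rw [h1, h2, pow_succ]
          nlinarith [h3]
    have Eh : EP k h := ⟨0, r, fun n _ => rfl⟩
    have Eg := EP_geom C0 d hd1 hd
    refine EP_congr ⟨n₁, fun n hn => ?_⟩ (EP_add Eh Eg)
    have := key n (by omega)
    linarith



variable {A : Type*} [DecidableEq A]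

/-- `rho u w` = length of the longest suffix of `u` that is a sublist of `w`
(computed greedily reading `w` from the left, matching `u` from its end). -/
def rho (u : List A) : List A → ℕ
  | [] => 0
  | a :: w =>
      if rho u w < u.length ∧ u[u.length - 1 - rho u w]? = some a then rho u w + 1
      else rho u w

lemma rho_nil (u : List A) : rho u [] = 0 := rfl

lemma rho_le (u : List A) : ∀ w, rho u w ≤ u.length := by
  intro w
  induction w with
  | nil => simp [rho_nil]
  | cons a w ih =>
    rw [rho]
    split
    · next h => omega
    · exact ih

lemma rho_cons_ge (u : List A) (a : A) (w : List A) : rho u w ≤ rho u (a :: w) := by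
  rw [rho]; split <;> omega

/-- The key specification: a suffix of `u` of length `p` embeds into `w` iff `p ≤ rho u w`. -/
lemma rho_spec (u : List A) : ∀ (w : List A) (p : ℕ), p ≤ u.length →
    (u.drop (u.length - p) <+ w ↔ p ≤ rho u w) := by
  intro w
  induction w with
  | nil =>
    intro p hp
    rw [rho_nil]
    constructor
    · intro h
      have := List.sublist_nil.1 h
      have hl : (u.drop (u.length - p)).length = 0 := by rw [this]; rfl
      rw [List.length_drop] at hl
      omega
    · intro h
      have : p = 0 := by omega
      subst this
      have : u.length - 0 = u.length := by omega
      rw [this, List.drop_length]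
  | cons a w ih =>
    intro p hp
    constructor
    · intro h
      rcases List.sublist_cons_iff.1 h with h' | ⟨r, hr, hr'⟩
      · calc p ≤ rho u w := (ih p hp).1 h'
          _ ≤ rho u (a :: w) := rho_cons_ge u a w
      · -- the embedding uses the head `a`
        have hp0 : 0 < p := by
          by_contra h0
          have : p = 0 := by omega
          subst this
          rw [Nat.sub_zero, List.drop_length] at hr
          exact List.cons_ne_nil a r hr.symm
        have hlen : (u.drop (u.length - p)).length = p := by
          rw [List.length_drop]; omega
        have hidx : u.length - p < u.length := by omega
        have hdropeq : u.drop (u.length - p) = u.get ⟨u.length - p, hidx⟩ :: u.drop (u.length - p + 1) := by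
          rw [List.drop_eq_getElem_cons hidx, List.get_eq_getElem]
        rw [hdropeq] at hr
        obtain ⟨hhead, htail⟩ : u.get ⟨u.length - p, hidx⟩ = a ∧ u.drop (u.length - p + 1) = r := by
          constructor <;> injection hr
        have h1 : u.drop (u.length - (p - 1)) <+ w := by
          have : u.length - (p - 1) = u.length - p + 1 := by omega
          rw [this, htail]; exact hr'
        have h2 : p - 1 ≤ rho u w := (ih (p - 1) (by omega)).1 h1
        rcases lt_or_eq_of_le h2 with h3 | h3
        · calc p ≤ rho u w := by omega
            _ ≤ rho u (a :: w) := rho_cons_ge u a w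
        · -- p - 1 = rho u w exactly; the automaton increments
          rw [rho, if_pos]
          · omega
          constructor
          · omega
          · have : u.length - 1 - rho u w = u.length - p := by omega
            rw [this, List.getElem?_eq_getElem hidx]
            simpa using hhead
    · intro h
      rw [rho] at h
      split at h
      · next hcond =>
        rcases Nat.lt_or_ge (rho u w) p with h1 | h1
        · -- p = rho u w + 1 : must use the head
          have hpeq : p = rho u w + 1 := by omega
          have hidx : u.length - p < u.length := by omega
          have hdropeq : u.drop (u.length - p) = u.get ⟨u.length - p, hidx⟩ :: u.drop (u.length - p + 1) :=
            by rw [List.drop_eq_getElem_cons hidx, List.get_eq_getElem]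
          have hget : u.get ⟨u.length - p, hidx⟩ = a := by
            have hi : u.length - 1 - rho u w = u.length - p := by omega
            rw [hi] at hcond
            have := hcond.2
            rw [List.getElem?_eq_getElem hidx] at this
            simpa using Option.some_injective _ this
          have htail : u.drop (u.length - p + 1) <+ w := by
            have he : u.length - p + 1 = u.length - rho u w := by omega
            rw [he]
            exact (ih (rho u w) (rho_le u w)).2 le_rfl
          rw [hdropeq, hget]
          exact htail.cons₂ a
        · exact ((ih p hp).2 h1).trans (List.sublist_cons_self a w)
      · exact ((ih p hp).2 h).trans (List.sublist_cons_self a w)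

lemma sublist_iff_rho_eq (u w : List A) : u <+ w ↔ rho u w = u.length := by
  have := rho_spec u w u.length le_rfl
  rw [Nat.sub_self, List.drop_zero] at this
  constructor
  · intro h
    exact le_antisymm (rho_le u w) (this.1 h)
  · intro h
    exact this.2 (le_of_eq h.symm)



lemma pwo_sublist (k : ℕ) : (Set.univ : Set (List (Fin k))).PartiallyWellOrderedOn (· <+ ·) := by
  have h : (Set.univ : Set (Fin k)).PartiallyWellOrderedOn (· = ·) :=
    Set.Finite.partiallyWellOrderedOn Set.finite_univ
  have H := Set.PartiallyWellOrderedOn.partiallyWellOrderedOn_sublistForall₂ (· = ·) h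
  have huniv : { l : List (Fin k) | ∀ x ∈ l, x ∈ (Set.univ : Set (Fin k)) } = Set.univ := by
    ext l; simp
  rw [huniv] at H
  intro f
  obtain ⟨m, n, hmn, h2⟩ := H f
  refine ⟨m, n, hmn, ?_⟩
  rcases List.sublistForall₂_iff.1 h2 with ⟨l, hl1, hl2⟩
  rw [List.forall₂_eq_eq_eq] at hl1
  show (f m).1 <+ (f n).1
  rwa [hl1]

lemma exists_min (U : Set (List (Fin k))) : ∀ (n : ℕ) (w : List (Fin k)), w.length ≤ n → w ∈ U →
    ∃ u ∈ U, u <+ w ∧ ∀ v ∈ U, v <+ u → v = u := by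
  intro n
  induction n with
  | zero =>
    intro w hw hwU
    have hnl : w = [] := List.eq_nil_of_length_eq_zero (by omega)
    subst hnl
    exact ⟨[], hwU, List.Sublist.refl [], fun v hv hvw => List.sublist_nil.1 hvw⟩
  | succ n ih =>
    intro w hw hwU
    by_cases h : ∀ v ∈ U, v <+ w → v = w
    · exact ⟨w, hwU, List.Sublist.refl w, h⟩
    · push_neg at h
      obtain ⟨v, hvU, hvw, hne⟩ := h
      have hlt : v.length < w.length := by
        rcases lt_or_eq_of_le hvw.length_le with h1 | h1
        · exact h1
        · exact absurd (hvw.eq_of_length h1) hne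
      obtain ⟨u, h1, h2, h3⟩ := ih v (by omega) hvU
      exact ⟨u, h1, h2.trans hvw, h3⟩

/-- An upward-closed set of words has a finite basis. -/
lemma exists_finite_basis {k : ℕ} (U : Set (List (Fin k)))
    (hU : ∀ u w, u <+ w → u ∈ U → w ∈ U) :
    ∃ F : Finset (List (Fin k)), ∀ w, w ∈ U ↔ ∃ u ∈ F, u <+ w := by
  classical
  set M : Set (List (Fin k)) := {u | u ∈ U ∧ ∀ v ∈ U, v <+ u → v = u} with hM
  have hant : IsAntichain (· <+ ·) M := fun u hu v hv hne huv => hne (hv.2 u hu.1 huv)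
  have hfin : M.Finite :=
    hant.finite_of_partiallyWellOrderedOn ((pwo_sublist k).mono (Set.subset_univ M))
  refine ⟨hfin.toFinset, fun w => ⟨fun hw => ?_, ?_⟩⟩
  · obtain ⟨u, h1, h2, h3⟩ := exists_min U w.length w le_rfl hw
    exact ⟨u, hfin.mem_toFinset.2 ⟨h1, h3⟩, h2⟩
  · rintro ⟨u, hu, huw⟩
    exact hU u w huw (hfin.mem_toFinset.1 hu).1

section Automaton

variable {k : ℕ} (F : Finset (List (Fin k)))

/-- State space of the subsequence-progress automaton. -/
abbrev St := ∀ u : {x // x ∈ F}, Fin (u.1.length + 1)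

/-- One transition step of the automaton on letter `a`. -/
def step (a : Fin k) (s : St F) : St F := fun u =>
  if h : (s u : ℕ) < u.1.length ∧ u.1[u.1.length - 1 - (s u : ℕ)]? = some a
  then ⟨(s u : ℕ) + 1, Nat.succ_lt_succ h.1⟩ else s u

/-- The state reached after reading a word (from the right). -/
def sigmaF : List (Fin k) → St F
  | [] => fun _ => ⟨0, Nat.succ_pos _⟩
  | a :: w => step F a (sigmaF w)

lemma sigmaF_val (w : List (Fin k)) (u : {x // x ∈ F}) :
    (sigmaF F w u : ℕ) = rho u.1 w := by
  induction w with
  | nil => rfl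
  | cons a w ih =>
    show ((step F a (sigmaF F w)) u : ℕ) = rho u.1 (a :: w)
    rw [rho, ← ih]
    unfold step
    by_cases hc : ((sigmaF F w u : ℕ) < u.1.length ∧
        u.1[u.1.length - 1 - (sigmaF F w u : ℕ)]? = some a)
    · rw [dif_pos hc, if_pos hc]
    · rw [dif_neg hc, if_neg hc]

lemma step_le (a : Fin k) (s : St F) (u : {x // x ∈ F}) :
    (s u : ℕ) ≤ (step F a s u : ℕ) := by
  unfold step
  by_cases hc : ((s u : ℕ) < u.1.length ∧ u.1[u.1.length - 1 - (s u : ℕ)]? = some a)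
  · rw [dif_pos hc]; exact Nat.le_succ _
  · rw [dif_neg hc]

/-- Count of words of length `n` (as tuples) reaching state `s`. -/
def cntS (n : ℕ) (s : St F) : ℕ :=
  (Finset.univ.filter (fun w : Fin n → Fin k => sigmaF F (List.ofFn w) = s)).card

def eMat (s' s : St F) : ℕ := (Finset.univ.filter (fun a : Fin k => step F a s' = s)).card

lemma eMat_le (s' s : St F) : eMat F s' s ≤ k := by
  calc eMat F s' s ≤ (Finset.univ : Finset (Fin k)).card := Finset.card_filter_le _ _
    _ = k := by simp

lemma ofFn_cons_eq {n : ℕ} (w : Fin (n + 1) → Fin k) :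
    List.ofFn w = w 0 :: List.ofFn (Fin.tail w) := by
  rw [List.ofFn_succ]; rfl

lemma sigmaF_ofFn_succ {n : ℕ} (w : Fin (n + 1) → Fin k) :
    sigmaF F (List.ofFn w) = step F (w 0) (sigmaF F (List.ofFn (Fin.tail w))) := by
  rw [ofFn_cons_eq]; rfl

lemma cnt_rec (n : ℕ) (s : St F) :
    cntS F (n + 1) s = ∑ s' : St F, eMat F s' s * cntS F n s' := by
  classical
  rw [cntS, Finset.card_eq_sum_card_fiberwise
    (f := fun w : Fin (n + 1) → Fin k => sigmaF F (List.ofFn (Fin.tail w)))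
    (t := Finset.univ) (fun _ _ => Finset.mem_univ _)]
  apply Finset.sum_congr rfl
  intro s' _
  rw [Finset.filter_filter, eMat, cntS, ← Finset.card_product]
  apply Finset.card_bij' (fun w _ => (w 0, Fin.tail w)) (fun p _ => Fin.cons p.1 p.2)
  · intro w hw
    rw [Finset.mem_filter] at hw
    obtain ⟨-, h1, h2⟩ := hw
    rw [sigmaF_ofFn_succ, h2] at h1
    exact Finset.mem_product.2 ⟨Finset.mem_filter.2 ⟨Finset.mem_univ _, h1⟩,
      Finset.mem_filter.2 ⟨Finset.mem_univ _, h2⟩⟩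
  · intro w _
    exact Fin.cons_self_tail w
  · intro p _
    simp [Fin.cons_zero, Fin.tail_cons]
  · intro p hp
    rw [Finset.mem_product, Finset.mem_filter, Finset.mem_filter] at hp
    obtain ⟨⟨-, h1⟩, -, h2⟩ := hp
    refine Finset.mem_filter.2 ⟨Finset.mem_univ _, ?_, ?_⟩
    · rw [sigmaF_ofFn_succ]
      rw [Fin.cons_zero, Fin.tail_cons, h2, h1]
    · rw [Fin.tail_cons, h2]

/-- Counting the words of length `n` lying in a downward-closed set whose complement is
generated by `F`. -/
lemma count_words (D : Set (List (Fin k)))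
    (hDF : ∀ w, w ∈ D ↔ ∀ u ∈ F, ¬ (u <+ w)) (n : ℕ) :
    Nat.card {w : Fin n → Fin k // List.ofFn w ∈ D} =
      ∑ s ∈ Finset.univ.filter (fun s : St F => ∀ u, (s u : ℕ) < u.1.length), cntS F n s := by
  classical
  have h1 : ∀ w : Fin n → Fin k, (List.ofFn w ∈ D) ↔
      (∀ u : {x // x ∈ F}, (sigmaF F (List.ofFn w) u : ℕ) < u.1.length) := by
    intro w
    rw [hDF]
    constructor
    · intro h u
      have h2 := h u.1 u.2
      rw [sublist_iff_rho_eq] at h2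
      have h3 := rho_le u.1 (List.ofFn w)
      rw [sigmaF_val]
      omega
    · intro h u hu
      intro hsub
      rw [sublist_iff_rho_eq] at hsub
      have h5 := h ⟨u, hu⟩
      rw [sigmaF_val] at h5
      have h6 : rho u (List.ofFn w) < u.length := h5
      omega
  have h2 : Nat.card {w : Fin n → Fin k // List.ofFn w ∈ D} =
      Nat.card {w : Fin n → Fin k //
        ∀ u : {x // x ∈ F}, (sigmaF F (List.ofFn w) u : ℕ) < u.1.length} :=
    Nat.card_congr (Equiv.subtypeEquivRight h1)
  rw [h2, Nat.card_eq_fintype_card, Fintype.card_subtype]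
  rw [Finset.card_eq_sum_card_fiberwise
    (f := fun w : Fin n → Fin k => sigmaF F (List.ofFn w))
    (t := Finset.univ.filter (fun s : St F => ∀ u, (s u : ℕ) < u.1.length))
    (fun w hw => by
      rw [Finset.mem_coe, Finset.mem_filter] at hw ⊢
      exact ⟨Finset.mem_univ _, hw.2⟩)]
  apply Finset.sum_congr rfl
  intro s hs
  rw [Finset.mem_filter] at hs
  rw [cntS]
  congr 1
  ext w
  simp only [Finset.mem_filter, Finset.mem_univ, true_and]
  constructor
  · rintro ⟨-, h⟩; exact h
  · intro h
    refine ⟨?_, h⟩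
    intro u
    rw [h]
    exact hs.2 u

/-- Each state-count is an exponential polynomial. -/
lemma EP_cntS (s : St F) : EP k (fun n => (cntS F n s : ℚ)) := by
  classical
  have main : ∀ (N : ℕ) (s : St F), (∑ u, (s u : ℕ)) = N →
      EP k (fun n => (cntS F n s : ℚ)) := by
    intro N
    induction N using Nat.strong_induction_on with
    | _ N ih =>
      intro s hs
      have hrec : ∀ n, (cntS F (n + 1) s : ℚ) =
          ((eMat F s s : ℕ) : ℚ) * (cntS F n s : ℚ) +
          (∑ s' ∈ Finset.univ.erase s, ((eMat F s' s : ℕ) : ℚ) * (cntS F n s' : ℚ)) := by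
        intro n
        have h0 := cnt_rec F n s
        have h1 : (∑ s' : St F, eMat F s' s * cntS F n s') =
            eMat F s s * cntS F n s + ∑ s' ∈ Finset.univ.erase s, eMat F s' s * cntS F n s' :=
          (Finset.add_sum_erase Finset.univ _ (Finset.mem_univ s)).symm
        rw [h0, h1]
        push_cast
        ring
      have hg : EP k (fun n => ∑ s' ∈ Finset.univ.erase s,
          ((eMat F s' s : ℕ) : ℚ) * (cntS F n s' : ℚ)) := by
        apply EP_sum
        intro s' hs'
        rcases Nat.eq_zero_or_pos (eMat F s' s) with h0 | h0
        · exact EP_congr ⟨0, fun n _ => by rw [h0]; simp⟩ EP_zero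
        · obtain ⟨a, ha⟩ : ∃ a, step F a s' = s := by
            obtain ⟨a, ha⟩ := Finset.card_pos.1 h0
            exact ⟨a, (Finset.mem_filter.1 ha).2⟩
          have hle : ∀ u, (s' u : ℕ) ≤ (s u : ℕ) := by
            intro u
            rw [← ha]
            exact step_le F a s' u
          have hne : s' ≠ s := (Finset.mem_erase.1 hs').1
          have hlt : (∑ u, (s' u : ℕ)) < N := by
            rw [← hs]
            obtain ⟨u, hu⟩ : ∃ u, s' u ≠ s u := by
              by_contra hc
              push_neg at hc
              exact hne (funext hc)
            exact Finset.sum_lt_sum (fun u _ => hle u)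
              ⟨u, Finset.mem_univ u, lt_of_le_of_ne (hle u) (fun hh => hu (Fin.ext hh))⟩
          exact EP_smul _ (ih _ hlt s' rfl)
      exact EP_rec (eMat F s s) (eMat_le F s s) hg hrec
  exact main _ s rfl

end Automaton

section Partitions

instance setoidFinite (n : ℕ) : Finite (Setoid (Fin n)) := by
  have hinj : Function.Injective (fun S : Setoid (Fin n) => S.r) := by
    intro S T h
    apply Setoid.ext
    intro a b
    rw [show S.r = T.r from h]
  exact Finite.of_injective _ hinj

/-- Words with all letters `< m` and kernel `S` are counted by a descending factorial. -/
lemma card_words_ker {k n m : ℕ} (hmk : m ≤ k) (S : Setoid (Fin n)) :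
    Nat.card {w : Fin n → Fin k // (∀ i, (w i : ℕ) < m) ∧ Setoid.ker w = S} =
      m.descFactorial (Nat.card (Quotient S)) := by
  classical
  have hrel : ∀ (w : {w : Fin n → Fin k // (∀ i, (w i : ℕ) < m) ∧ Setoid.ker w = S})
      (x y : Fin n), w.1 x = w.1 y ↔ S.r x y := by
    rintro ⟨w, hw1, hw2⟩ x y
    subst hw2
    exact Iff.rfl
  have e : {w : Fin n → Fin k // (∀ i, (w i : ℕ) < m) ∧ Setoid.ker w = S} ≃
      (Quotient S ↪ Fin m) := by
    refine
      { toFun := fun w => ⟨Quotient.lift (fun x => (⟨(w.1 x : ℕ), w.2.1 x⟩ : Fin m))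
          (fun x y hxy => Fin.ext (by
            have := (hrel w x y).2 hxy
            simp [this])), ?_⟩
        invFun := fun φ => ⟨fun i => Fin.castLE hmk (φ.1 (Quotient.mk S i)), ?_, ?_⟩
        left_inv := ?_
        right_inv := ?_ }
    · -- injectivity
      intro a b
      induction a using Quotient.ind
      induction b using Quotient.ind
      intro hab
      rename_i x y
      apply Quotient.sound
      apply (hrel w x y).1
      apply Fin.ext
      simpa using congrArg Fin.val hab
    · intro i
      simpa using (φ.1 (Quotient.mk S i)).2
    · apply Setoid.ext
      intro x y
      constructor
      · intro h
        have h2 : φ.1 (Quotient.mk S x) = φ.1 (Quotient.mk S y) := by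
          apply Fin.ext
          simpa [Fin.castLE] using congrArg Fin.val h
        exact Quotient.exact (φ.2 h2)
      · intro h
        have : Quotient.mk S x = Quotient.mk S y := Quotient.sound h
        simp [Setoid.ker, Function.onFun, this]
    · intro w
      apply Subtype.ext
      funext i
      apply Fin.ext
      simp [Fin.castLE]
    · intro φ
      ext q
      induction q using Quotient.ind
      rfl
  rw [Nat.card_congr e]
  letI : Fintype (Quotient S) := Fintype.ofFinite _
  rw [Nat.card_eq_fintype_card, Fintype.card_embedding_eq, Fintype.card_fin,
    Nat.card_eq_fintype_card]

end Partitions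

section Counting

variable {k : ℕ}

/-- Grouping words by their kernel. -/
lemma cnt_eq (P : ∀ n : ℕ, Set (Setoid (Fin n)))
    (hbound : ∀ (n : ℕ) (S : Setoid (Fin n)), S ∈ P n → Nat.card (Quotient S) ≤ k)
    (m n : ℕ) (hmk : m ≤ k) :
    Nat.card {w : Fin n → Fin k // (∀ i, (w i : ℕ) < m) ∧ Setoid.ker w ∈ P n} =
      ∑ j ∈ Finset.range (k + 1), m.descFactorial j *
        Nat.card {S : Setoid (Fin n) // S ∈ P n ∧ Nat.card (Quotient S) = j} := by
  classical
  letI : Fintype (Setoid (Fin n)) := Fintype.ofFinite _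
  rw [Nat.card_eq_fintype_card, Fintype.card_subtype]
  rw [Finset.card_eq_sum_card_fiberwise
    (f := fun w : Fin n → Fin k => Setoid.ker w)
    (t := Finset.univ.filter (fun S : Setoid (Fin n) => S ∈ P n))
    (fun w hw => by
      rw [Finset.mem_coe, Finset.mem_filter] at hw ⊢
      exact ⟨Finset.mem_univ _, hw.2.2⟩)]
  have hfib : ∀ S ∈ Finset.univ.filter (fun S : Setoid (Fin n) => S ∈ P n),
      ((Finset.univ.filter
          (fun w : Fin n → Fin k => (∀ i, (w i : ℕ) < m) ∧ Setoid.ker w ∈ P n)).filter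
        (fun w => Setoid.ker w = S)).card = m.descFactorial (Nat.card (Quotient S)) := by
    intro S hS
    rw [Finset.mem_filter] at hS
    rw [← card_words_ker hmk S, Nat.card_eq_fintype_card, Fintype.card_subtype,
      Finset.filter_filter]
    congr 1
    apply Finset.filter_congr
    intro w _
    constructor
    · rintro ⟨⟨h1, h2⟩, h3⟩
      exact ⟨h1, h3⟩
    · rintro ⟨h1, h3⟩
      exact ⟨⟨h1, h3 ▸ hS.2⟩, h3⟩
  rw [Finset.sum_congr rfl hfib]
  rw [← Finset.sum_fiberwise_of_maps_to
    (g := fun S : Setoid (Fin n) => Nat.card (Quotient S))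
    (t := Finset.range (k + 1))
    (fun S hS => Finset.mem_range.2 (Nat.lt_succ_of_le
      (hbound n S (Finset.mem_filter.1 hS).2)))]
  apply Finset.sum_congr rfl
  intro j _
  have hinner : ∀ S ∈ (Finset.univ.filter (fun S : Setoid (Fin n) => S ∈ P n)).filter
      (fun S => Nat.card (Quotient S) = j),
      m.descFactorial (Nat.card (Quotient S)) = m.descFactorial j := by
    intro S hS
    rw [(Finset.mem_filter.1 hS).2]
  rw [Finset.sum_congr rfl hinner, Finset.sum_const, smul_eq_mul, mul_comm]
  congr 1
  rw [Nat.card_eq_fintype_card, Fintype.card_subtype, Finset.filter_filter]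

/-- Grouping the partitions in `P n` by their number of blocks. -/
lemma total_eq (P : ∀ n : ℕ, Set (Setoid (Fin n)))
    (hbound : ∀ (n : ℕ) (S : Setoid (Fin n)), S ∈ P n → Nat.card (Quotient S) ≤ k) (n : ℕ) :
    Nat.card {S : Setoid (Fin n) // S ∈ P n} =
      ∑ j ∈ Finset.range (k + 1),
        Nat.card {S : Setoid (Fin n) // S ∈ P n ∧ Nat.card (Quotient S) = j} := by
  classical
  letI : Fintype (Setoid (Fin n)) := Fintype.ofFinite _
  rw [Nat.card_eq_fintype_card, Fintype.card_subtype]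
  rw [Finset.card_eq_sum_card_fiberwise
    (f := fun S : Setoid (Fin n) => Nat.card (Quotient S))
    (t := Finset.range (k + 1))
    (fun S hS => Finset.mem_range.2 (Nat.lt_succ_of_le
      (hbound n S (Finset.mem_filter.1 hS).2)))]
  apply Finset.sum_congr rfl
  intro j _
  rw [Nat.card_eq_fintype_card, Fintype.card_subtype, Finset.filter_filter]

/-- Inverting the triangular matrix of descending factorials. -/
lemma exists_coeffs (k : ℕ) : ∃ c : Fin (k + 1) → ℚ,
    ∀ j : Fin (k + 1), (∑ m : Fin (k + 1), c m * (((m : ℕ).descFactorial (j : ℕ) : ℕ) : ℚ)) = 1 := by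
  classical
  set M : Matrix (Fin (k + 1)) (Fin (k + 1)) ℚ :=
    Matrix.of (fun m j => (((m : ℕ).descFactorial (j : ℕ) : ℕ) : ℚ)) with hM
  have htri : M.BlockTriangular ⇑OrderDual.toDual := by
    intro i j hij
    have h2 : (i : ℕ) < (j : ℕ) := hij
    show (((i : ℕ).descFactorial (j : ℕ) : ℕ) : ℚ) = 0
    rw [Nat.descFactorial_eq_zero_iff_lt.2 h2]
    simp
  have hdet : M.det = ∏ i, M i i := Matrix.det_of_lowerTriangular M htri
  have hne : M.det ≠ 0 := by
    rw [hdet]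
    apply Finset.prod_ne_zero_iff.2
    intro i _
    show (((i : ℕ).descFactorial (i : ℕ) : ℕ) : ℚ) ≠ 0
    rw [Nat.descFactorial_self]
    exact_mod_cast Nat.factorial_ne_zero _
  refine ⟨Matrix.vecMul 1 M⁻¹, fun j => ?_⟩
  have h2 : Matrix.vecMul (Matrix.vecMul 1 M⁻¹) M = 1 := by
    rw [Matrix.vecMul_vecMul, Matrix.nonsing_inv_mul M (Ne.isUnit hne), Matrix.vecMul_one]
  have h3 := congrFun h2 j
  have h4 : (Matrix.vecMul (Matrix.vecMul 1 M⁻¹) M) j =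
      ∑ m : Fin (k + 1), Matrix.vecMul 1 M⁻¹ m * M m j := by
    simp [Matrix.vecMul, dotProduct]
  rw [h4] at h3
  exact h3

end Counting

section Main

variable {k : ℕ}

lemma ker_mem_iff (P : ∀ n : ℕ, Set (Setoid (Fin n)))
    (hdown : ∀ (m n : ℕ) (S : Setoid (Fin m)) (T : Setoid (Fin n)),
      PartitionLE S T → T ∈ P n → S ∈ P m)
    {n : ℕ} (w : Fin n → Fin k) :
    Setoid.ker ((List.ofFn w).get) ∈ P ((List.ofFn w).length) ↔ Setoid.ker w ∈ P n := by
  have hlen : (List.ofFn w).length = n := List.length_ofFn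
  have hget : ∀ i : Fin (List.ofFn w).length, (List.ofFn w).get i = w (Fin.cast hlen i) :=
    fun i => List.get_ofFn w i
  have hmono1 : StrictMono (fun i : Fin n => Fin.cast hlen.symm i) := by
    intro a b hab
    rw [Fin.lt_def] at hab ⊢
    simpa using hab
  have hmono2 : StrictMono (fun i : Fin (List.ofFn w).length => Fin.cast hlen i) := by
    intro a b hab
    rw [Fin.lt_def] at hab ⊢
    simpa using hab
  constructor
  · intro h
    refine hdown n _ _ _ ⟨fun i => Fin.cast hlen.symm i, hmono1, ?_⟩ h
    intro x y
    show w x = w y ↔ (List.ofFn w).get _ = (List.ofFn w).get _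
    rw [hget, hget]
    have hcc : ∀ x : Fin n, Fin.cast hlen (Fin.cast hlen.symm x) = x := fun x => Fin.ext rfl
    rw [hcc, hcc]
  · intro h
    refine hdown _ n _ _ ⟨fun i => Fin.cast hlen i, hmono2, ?_⟩ h
    intro x y
    show (List.ofFn w).get x = (List.ofFn w).get y ↔ w _ = w _
    rw [hget x, hget y]

lemma EP_cnt_words (P : ∀ n : ℕ, Set (Setoid (Fin n)))
    (hdown : ∀ (m n : ℕ) (S : Setoid (Fin m)) (T : Setoid (Fin n)),
      PartitionLE S T → T ∈ P n → S ∈ P m)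
    (m : ℕ) :
    EP k (fun n => (Nat.card {w : Fin n → Fin k //
        (∀ i, (w i : ℕ) < m) ∧ Setoid.ker w ∈ P n} : ℚ)) := by
  classical
  set D : Set (List (Fin k)) :=
    {l | (∀ x ∈ l, (x : ℕ) < m) ∧ Setoid.ker l.get ∈ P l.length} with hD
  have hdownD : ∀ u w, u <+ w → w ∈ D → u ∈ D := by
    intro u w huw hw
    obtain ⟨f, hf⟩ := List.sublist_iff_exists_fin_orderEmbedding_get_eq.1 huw
    refine ⟨fun x hx => hw.1 x (huw.subset hx), ?_⟩
    refine hdown _ _ _ _ ⟨fun i => f i, f.strictMono, ?_⟩ hw.2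
    intro x y
    show u.get x = u.get y ↔ w.get (f x) = w.get (f y)
    rw [hf x, hf y]
  obtain ⟨F, hF⟩ := exists_finite_basis Dᶜ
    (fun u w huw hu hwD => hu (hdownD u w huw hwD))
  have hDF : ∀ w, w ∈ D ↔ ∀ u ∈ F, ¬ (u <+ w) := by
    intro w
    constructor
    · intro hw u hu hsub
      have huD : u ∈ Dᶜ := (hF u).2 ⟨u, hu, List.Sublist.refl u⟩
      exact huD (hdownD u w hsub hw)
    · intro h
      by_contra hw
      obtain ⟨u, hu, hsub⟩ := (hF w).1 hw
      exact h u hu hsub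
  have hmem : ∀ (n : ℕ) (w : Fin n → Fin k),
      (List.ofFn w ∈ D) ↔ ((∀ i, (w i : ℕ) < m) ∧ Setoid.ker w ∈ P n) := by
    intro n w
    rw [hD]
    constructor
    · rintro ⟨h1, h2⟩
      exact ⟨fun i => h1 (w i) (List.mem_ofFn.2 ⟨i, rfl⟩), (ker_mem_iff P hdown w).1 h2⟩
    · rintro ⟨h1, h2⟩
      refine ⟨fun x hx => ?_, (ker_mem_iff P hdown w).2 h2⟩
      obtain ⟨i, rfl⟩ := List.mem_ofFn.1 hx
      exact h1 i
  refine EP_congr ⟨0, fun n _ => ?_⟩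
    (EP_sum (Finset.univ.filter (fun s : St F => ∀ u, (s u : ℕ) < u.1.length))
      (fun s n => (cntS F n s : ℚ)) (fun s _ => EP_cntS F s))
  have h1 : Nat.card {w : Fin n → Fin k // (∀ i, (w i : ℕ) < m) ∧ Setoid.ker w ∈ P n} =
      Nat.card {w : Fin n → Fin k // List.ofFn w ∈ D} :=
    Nat.card_congr (Equiv.subtypeEquivRight (fun w => (hmem n w).symm))
  rw [h1, count_words F D hDF n]
  push_cast
  rfl

end Main

end KlazarAux

/-- Klazar's theorem.  If `P` is a downset of set partitions in which
the maximum number of blocks is exactly `k`, then for all large `n` the number of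
partitions of order `n` in `P` equals `p₁(n)·1ⁿ + ⋯ + p_k(n)·kⁿ` for rational
polynomials `p₁, …, p_k`. -/
theorem stmt_1 (P : ∀ n : ℕ, Set (Setoid (Fin n)))
    (hdown : ∀ (m n : ℕ) (S : Setoid (Fin m)) (T : Setoid (Fin n)),
      PartitionLE S T → T ∈ P n → S ∈ P m)
    (k : ℕ)
    (hbound : ∀ (n : ℕ) (S : Setoid (Fin n)), S ∈ P n → Nat.card (Quotient S) ≤ k)
    (hattain : ∃ (n : ℕ) (S : Setoid (Fin n)), S ∈ P n ∧ Nat.card (Quotient S) = k) :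
    ∃ (n₀ : ℕ) (p : Fin k → Polynomial ℚ),
      ∀ n : ℕ, n > n₀ →
        ((P n).ncard : ℚ) = ∑ i : Fin k, (p i).eval (n : ℚ) * (((i : ℕ) : ℚ) + 1) ^ n := by
  classical
  obtain ⟨c, hc⟩ := KlazarAux.exists_coeffs k
  have hW : ∀ m : Fin (k + 1), KlazarAux.EP k (fun n =>
      (Nat.card {w : Fin n → Fin k //
        (∀ i, (w i : ℕ) < (m : ℕ)) ∧ Setoid.ker w ∈ P n} : ℚ)) :=
    fun m => KlazarAux.EP_cnt_words P hdown (m : ℕ)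
  have hEP := KlazarAux.EP_sum (Finset.univ : Finset (Fin (k + 1)))
    (fun m n => c m * (Nat.card {w : Fin n → Fin k //
      (∀ i, (w i : ℕ) < (m : ℕ)) ∧ Setoid.ker w ∈ P n} : ℚ))
    (fun m _ => KlazarAux.EP_smul (c m) (hW m))
  have key : ∀ n : ℕ,
      (∑ m : Fin (k + 1), c m * (Nat.card {w : Fin n → Fin k //
        (∀ i, (w i : ℕ) < (m : ℕ)) ∧ Setoid.ker w ∈ P n} : ℚ)) = ((P n).ncard : ℚ) := by
    intro n
    have htot := KlazarAux.total_eq P hbound n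
    calc (∑ m : Fin (k + 1), c m * (Nat.card {w : Fin n → Fin k //
          (∀ i, (w i : ℕ) < (m : ℕ)) ∧ Setoid.ker w ∈ P n} : ℚ))
        = ∑ m : Fin (k + 1), c m * ∑ j ∈ Finset.range (k + 1),
            (((m : ℕ).descFactorial j : ℕ) : ℚ) *
            (Nat.card {S : Setoid (Fin n) // S ∈ P n ∧ Nat.card (Quotient S) = j} : ℚ) := by
          apply Finset.sum_congr rfl
          intro m _
          rw [KlazarAux.cnt_eq P hbound (m : ℕ) n (by omega)]
          push_cast
          ring
      _ = ∑ j ∈ Finset.range (k + 1),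
            (∑ m : Fin (k + 1), c m * (((m : ℕ).descFactorial j : ℕ) : ℚ)) *
            (Nat.card {S : Setoid (Fin n) // S ∈ P n ∧ Nat.card (Quotient S) = j} : ℚ) := by
          simp only [Finset.mul_sum]
          rw [Finset.sum_comm]
          apply Finset.sum_congr rfl
          intro j _
          rw [Finset.sum_mul]
          apply Finset.sum_congr rfl
          intro m _
          ring
      _ = ∑ j ∈ Finset.range (k + 1),
            (Nat.card {S : Setoid (Fin n) // S ∈ P n ∧ Nat.card (Quotient S) = j} : ℚ) := by
          apply Finset.sum_congr rfl
          intro j hj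
          have hj' : j < k + 1 := Finset.mem_range.1 hj
          have h2 := hc ⟨j, hj'⟩
          rw [show ((⟨j, hj'⟩ : Fin (k + 1)) : ℕ) = j from rfl] at h2
          rw [h2, one_mul]
      _ = ((P n).ncard : ℚ) := by
          rw [← Nat.card_coe_set_eq, htot]
          push_cast
          rfl
  have hfin := KlazarAux.EP_congr ⟨0, fun n _ => key n⟩ hEP
  unfold KlazarAux.EP at hfin
  exact hfin
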